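/- Let G : Ω → 𝔻 be a nowhere-holomorphic C² function on an open set Ω ⊆ ℂ satisfying the translator equation (Gauss), and define φ = (φ₁, φ₂, φ₃) := (2·conj(G)_z / (|G|⁴ − 1))·(1 − G², i(1 + G²), 2G) : Ω → ℂ³. Then at every point of Ω: (nullity) φ₁² + φ₂² + φ₃² = 0; (non-degeneracy) |φ₁|² + |φ₂|² + |φ₃|² > 0; and (integrability) the Wirtinger derivatives (φ₁)_z̄, (φ₂)_z̄, (φ₃)_z̄ are all real-valued. -/

import Mathlib

open Complex ComplexConjugate

/-- Wirtinger derivative `∂h/∂z = ½(∂h/∂u − i ∂h/∂v)` of a map `h : ℂ → ℂ`. -/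
noncomputable def wz (h : ℂ → ℂ) (z : ℂ) : ℂ :=
  (1 / 2) * (fderiv ℝ h z 1 - Complex.I * fderiv ℝ h z Complex.I)

/-- Wirtinger derivative `∂h/∂z̄ = ½(∂h/∂u + i ∂h/∂v)` of a map `h : ℂ → ℂ`. -/
noncomputable def wzb (h : ℂ → ℂ) (z : ℂ) : ℂ :=
  (1 / 2) * (fderiv ℝ h z 1 + Complex.I * fderiv ℝ h z Complex.I)

/-- Wirtinger derivative `∂x/∂z` of a real-valued map `x : ℂ → ℝ`. -/
noncomputable def wzR (x : ℂ → ℝ) (z : ℂ) : ℂ :=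
  (1 / 2) * (((fderiv ℝ x z 1 : ℝ) : ℂ) - Complex.I * ((fderiv ℝ x z Complex.I : ℝ) : ℂ))

/-- The translator equation (Gauss) for `G : Ω → 𝔻`:
`G_{zz̄} + 2(conj(G)|G|²/(1 − |G|⁴))·G_z·G_z̄ + 2(G/(1 − |G|⁴))·|G_z̄|² = 0`. -/
def GaussEq (G : ℂ → ℂ) (z : ℂ) : Prop :=
  wz (wzb G) z
    + 2 * (conj (G z) * (Complex.normSq (G z) : ℂ)
        / (1 - (Complex.normSq (G z) : ℂ) ^ 2)) * wz G z * wzb G z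
    + 2 * (G z / (1 - (Complex.normSq (G z) : ℂ) ^ 2)) * (Complex.normSq (wzb G z) : ℂ) = 0

/-- The null curve `φ = (2·conj(G)_z/(|G|⁴ − 1))·(1 − G², i(1 + G²), 2G)` in `ℂ³`. -/
noncomputable def phi3 (G : ℂ → ℂ) (z : ℂ) : Fin 3 → ℂ :=
  ![(2 * wz (fun w => conj (G w)) z / ((Complex.normSq (G z) : ℂ) ^ 2 - 1)) * (1 - (G z) ^ 2),
    (2 * wz (fun w => conj (G w)) z / ((Complex.normSq (G z) : ℂ) ^ 2 - 1))
      * (Complex.I * (1 + (G z) ^ 2)),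
    (2 * wz (fun w => conj (G w)) z / ((Complex.normSq (G z) : ℂ) ^ 2 - 1)) * (2 * G z)]

section WirtingerRules
variable {h h₁ h₂ : ℂ → ℂ} {z : ℂ}

lemma fderiv_conj_apply (hd : DifferentiableAt ℝ h z) (v : ℂ) :
    fderiv ℝ (fun w => conj (h w)) z v = conj (fderiv ℝ h z v) := by
  have : HasFDerivAt (fun w => conj (h w))
      ((Complex.conjCLE.toContinuousLinearMap).comp (fderiv ℝ h z)) z :=
    (Complex.conjCLE.toContinuousLinearMap.hasFDerivAt).comp z hd.hasFDerivAt
  rw [this.fderiv]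
  simp

lemma wzb_conj (hd : DifferentiableAt ℝ h z) :
    wzb (fun w => conj (h w)) z = conj (wz h z) := by
  simp only [wzb, wz, fderiv_conj_apply hd]
  simp only [map_mul, map_sub, map_div₀, map_one, map_ofNat, Complex.conj_I]
  ring

lemma wz_conj (hd : DifferentiableAt ℝ h z) :
    wz (fun w => conj (h w)) z = conj (wzb h z) := by
  simp only [wzb, wz, fderiv_conj_apply hd]
  simp only [map_mul, map_add, map_div₀, map_one, map_ofNat, Complex.conj_I]
  ring

lemma wzb_mul (h₁d : DifferentiableAt ℝ h₁ z) (h₂d : DifferentiableAt ℝ h₂ z) :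
    wzb (fun w => h₁ w * h₂ w) z = wzb h₁ z * h₂ z + h₁ z * wzb h₂ z := by
  simp only [wzb, fderiv_fun_mul h₁d h₂d]
  simp [smul_eq_mul]
  ring

lemma wzb_const_mul (c : ℂ) (hd : DifferentiableAt ℝ h z) :
    wzb (fun w => c * h w) z = c * wzb h z := by
  simp only [wzb, fderiv_const_mul hd c]
  simp [smul_eq_mul]
  ring

lemma wzb_const (c : ℂ) : wzb (fun _ => c) z = 0 := by
  simp [wzb, fderiv_const]

lemma wzb_sub (h₁d : DifferentiableAt ℝ h₁ z) (h₂d : DifferentiableAt ℝ h₂ z) :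
    wzb (fun w => h₁ w - h₂ w) z = wzb h₁ z - wzb h₂ z := by
  simp only [wzb, fderiv_fun_sub h₁d h₂d]
  simp
  ring

lemma wzb_add (h₁d : DifferentiableAt ℝ h₁ z) (h₂d : DifferentiableAt ℝ h₂ z) :
    wzb (fun w => h₁ w + h₂ w) z = wzb h₁ z + wzb h₂ z := by
  simp only [wzb, fderiv_fun_add h₁d h₂d]
  simp
  ring

lemma wzb_inv (hd : DifferentiableAt ℝ h z) (hne : h z ≠ 0) :
    wzb (fun w => (h w)⁻¹) z = -((h z)^2)⁻¹ * wzb h z := by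
  have H : HasFDerivAt (fun w => (h w)⁻¹) ((-(h z ^ 2)⁻¹ : ℂ) • fderiv ℝ h z) z :=
    (hasDerivAt_inv hne).comp_hasFDerivAt z hd.hasFDerivAt
  simp only [wzb, H.fderiv]
  simp [smul_eq_mul]
  ring

lemma wzb_congr (h : h₁ =ᶠ[nhds z] h₂) : wzb h₁ z = wzb h₂ z := by
  simp only [wzb, h.fderiv_eq]

end WirtingerRules

set_option maxHeartbeats 1000000 in
/-- **(Theorem, part (a), for `ℝ³`).** If `G : Ω → 𝔻` is nowhere holomorphic, `C²`, and
satisfies the translator equation (Gauss), then the complex curve `φ` is null,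
non-degenerate, and its Wirtinger `z̄`-derivatives are real-valued. -/
theorem phi3_null_nondeg_integrable
    (Ω : Set ℂ) (hΩ : IsOpen Ω) (G : ℂ → ℂ)
    (hG : ContDiffOn ℝ 2 G Ω)
    (hdisc : ∀ z ∈ Ω, ‖G z‖ < 1)
    (hnh : ∀ z ∈ Ω, wzb G z ≠ 0)
    (hGauss : ∀ z ∈ Ω, GaussEq G z) :
    ∀ z ∈ Ω,
      (∑ k : Fin 3, (phi3 G z k) ^ 2 = 0)
      ∧ (0 < ∑ k : Fin 3, Complex.normSq (phi3 G z k))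
      ∧ (∀ k : Fin 3, (wzb (fun w => phi3 G w k) z).im = 0) := by
  have hGd : ∀ w ∈ Ω, DifferentiableAt ℝ G w := fun w hw =>
    (hG.differentiableOn two_ne_zero).differentiableAt (hΩ.mem_nhds hw)
  have hB : ContDiffOn ℝ 1 (fun w => wzb G w) Ω := by
    have h1 : ContDiffOn ℝ 1 (fderiv ℝ G) Ω := hG.fderiv_of_isOpen hΩ (by norm_num)
    simp only [wzb]
    exact contDiffOn_const.mul ((h1.clm_apply contDiffOn_const).add
      (contDiffOn_const.mul (h1.clm_apply contDiffOn_const)))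
  intro z hz
  -- basic real estimates
  have hr1 : Complex.normSq (G z) < 1 := by
    have := hdisc z hz
    rw [← Complex.sq_norm]
    nlinarith [norm_nonneg (G z)]
  have hr0 : 0 ≤ Complex.normSq (G z) := Complex.normSq_nonneg _
  have hb : wzb G z ≠ 0 := hnh z hz
  have hnb : 0 < Complex.normSq (wzb G z) := Complex.normSq_pos.mpr hb
  -- differentiabilities
  have dG : DifferentiableAt ℝ G z := hGd z hz
  have dB : DifferentiableAt ℝ (wzb G) z :=
    (hB.differentiableOn one_ne_zero).differentiableAt (hΩ.mem_nhds hz)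
  have dconjG : DifferentiableAt ℝ (fun w => conj (G w)) z :=
    (Complex.conjCLE.toContinuousLinearMap.differentiableAt).comp z dG
  have dconjB : DifferentiableAt ℝ (fun w => conj (wzb G w)) z :=
    (Complex.conjCLE.toContinuousLinearMap.differentiableAt).comp z dB
  have dGG : DifferentiableAt ℝ (fun w => G w * conj (G w)) z := dG.mul dconjG
  have dQf : DifferentiableAt ℝ (fun w => (G w * conj (G w)) * (G w * conj (G w)) - 1) z :=
    (dGG.mul dGG).sub_const 1
  -- nonvanishing denominators
  have hgc : G z * conj (G z) = ((Complex.normSq (G z) : ℝ) : ℂ) := Complex.mul_conj _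
  have hQ : ((Complex.normSq (G z) : ℝ) : ℂ) ^ 2 - 1 ≠ 0 := by
    have : (Complex.normSq (G z) ^ 2 - 1 : ℝ) ≠ 0 := by nlinarith
    exact_mod_cast this
  have h0 : (1 : ℂ) - ((Complex.normSq (G z) : ℝ) : ℂ) ^ 2 ≠ 0 := by
    have : (1 - Complex.normSq (G z) ^ 2 : ℝ) ≠ 0 := by nlinarith
    exact_mod_cast this
  have hQfz : (G z * conj (G z)) * (G z * conj (G z)) - 1 ≠ 0 := by
    rw [hgc]
    have : (Complex.normSq (G z) * Complex.normSq (G z) - 1 : ℝ) ≠ 0 := by nlinarith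
    exact_mod_cast this
  have hQQ : (G z * conj (G z)) ^ 2 - 1 ≠ 0 := by
    rw [hgc]; exact hQ
  have hmm : (1 : ℂ) - G z * conj (G z) ≠ 0 := by
    rw [hgc]
    have : (1 - Complex.normSq (G z) : ℝ) ≠ 0 := by nlinarith
    exact_mod_cast this
  have hpp : (1 : ℂ) + G z * conj (G z) ≠ 0 := by
    rw [hgc]
    have : (1 + Complex.normSq (G z) : ℝ) ≠ 0 := by nlinarith
    exact_mod_cast this
  have hQ2 : G z ^ 2 * conj (G z) ^ 2 - 1 ≠ 0 := by
    rw [← mul_pow]; exact hQQ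
  have dQinv : DifferentiableAt ℝ
      (fun w => ((G w * conj (G w)) * (G w * conj (G w)) - 1)⁻¹) z :=
    ((hasDerivAt_inv hQfz).comp_hasFDerivAt z dQf.hasFDerivAt).differentiableAt
  have dFn : DifferentiableAt ℝ
      (fun w => 2 * (conj (wzb G w) * ((G w * conj (G w)) * (G w * conj (G w)) - 1)⁻¹)) z :=
    (dconjB.mul dQinv).const_mul 2
  -- the factor is nonzero
  have hcb : wz (fun w => conj (G w)) z = conj (wzb G z) := wz_conj dG
  have hcbne : wz (fun w => conj (G w)) z ≠ 0 := by
    rw [hcb]; simpa using hb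
  have hc : 2 * wz (fun w => conj (G w)) z / ((Complex.normSq (G z) : ℂ) ^ 2 - 1) ≠ 0 :=
    div_ne_zero (mul_ne_zero two_ne_zero hcbne) hQ
  refine ⟨?_, ?_, ?_⟩
  · simp only [Fin.sum_univ_three, phi3, Matrix.cons_val_zero, Matrix.cons_val_one,
      Matrix.head_cons, Matrix.cons_val_two, Matrix.tail_cons]
    linear_combination (2 * wz (fun w => conj (G w)) z / ((Complex.normSq (G z) : ℂ) ^ 2 - 1))^2
      * (1 + (G z)^2)^2 * Complex.I_sq
  · simp only [Fin.sum_univ_three, phi3, Matrix.cons_val_zero, Matrix.cons_val_one,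
      Matrix.head_cons, Matrix.cons_val_two, Matrix.tail_cons, Complex.normSq_mul,
      Complex.normSq_I]
    have h2 : (0:ℝ) < Complex.normSq (1 - (G z)^2) + Complex.normSq (1 + (G z)^2) := by
      rcases eq_or_ne ((G z)^2) 1 with h | h
      · rw [h]; norm_num
      · have : (1:ℂ) - (G z)^2 ≠ 0 := sub_ne_zero.mpr (Ne.symm h)
        exact add_pos_of_pos_of_nonneg (Complex.normSq_pos.mpr this) (Complex.normSq_nonneg _)
    have hc2 : 0 < Complex.normSq
        (2 * wz (fun w => conj (G w)) z / ((Complex.normSq (G z) : ℂ) ^ 2 - 1)) :=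
      Complex.normSq_pos.mpr hc
    nlinarith [mul_pos hc2 h2, mul_nonneg hc2.le (Complex.normSq_nonneg (G z)),
      mul_nonneg hc2.le (mul_nonneg (Complex.normSq_nonneg 2) (Complex.normSq_nonneg (G z)))]
  -- part 3
  · -- Gauss manipulation
    have hGz := hGauss z hz
    unfold GaussEq at hGz
    have hconjGauss := congrArg (starRingEnd ℂ) hGz
    simp only [map_add, map_mul, map_div₀, map_sub, map_one, map_pow, map_zero, map_ofNat,
      Complex.conj_ofReal, Complex.conj_conj] at hconjGauss
    have hcp : conj (wz (wzb G) z)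
        = (2 * G z * ((Complex.normSq (G z) : ℝ) : ℂ) * conj (wz G z) * conj (wzb G z)
            + 2 * conj (G z) * ((Complex.normSq (wzb G z) : ℝ) : ℂ))
          / (((Complex.normSq (G z) : ℝ) : ℂ) ^ 2 - 1) := by
      rw [eq_div_iff hQ]
      field_simp [h0] at hconjGauss
      linear_combination -hconjGauss
    -- pointwise description of the factor on Ω
    have hev : ∀ w ∈ Ω, 2 * wz (fun u => conj (G u)) w / ((Complex.normSq (G w) : ℂ) ^ 2 - 1)
        = 2 * (conj (wzb G w) * ((G w * conj (G w)) * (G w * conj (G w)) - 1)⁻¹) := by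
      intro w hw
      rw [wz_conj (hGd w hw), div_eq_mul_inv, mul_assoc]
      congr 2
      rw [Complex.mul_conj]
      ring
    have hre : (((G z).re : ℝ) : ℂ) = (G z + conj (G z)) / 2 := by
      have h1 := Complex.add_conj (G z)
      push_cast at h1
      linear_combination (-1/2 : ℂ) * h1
    have him : (((G z).im : ℝ) : ℂ) = (conj (G z) - G z) * Complex.I / 2 := by
      have h2 := Complex.sub_conj (G z)
      push_cast at h2
      linear_combination (Complex.I / 2) * h2 + (((G z).im : ℝ) : ℂ) * Complex.I_sq
    -- three components
    have E0 : wzb (fun w => phi3 G w 0) z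
        = ((8 * Complex.normSq (wzb G z) * (G z).re
            / ((1 - Complex.normSq (G z)) * (1 + Complex.normSq (G z))^2) : ℝ) : ℂ) := by
      have hEq : (fun w => phi3 G w 0) =ᶠ[nhds z]
          fun w => (2 * (conj (wzb G w) * ((G w * conj (G w)) * (G w * conj (G w)) - 1)⁻¹))
            * (1 - G w * G w) := by
        filter_upwards [hΩ.mem_nhds hz] with w hw
        simp only [phi3, Matrix.cons_val_zero]
        rw [hev w hw]; ring
      rw [wzb_congr hEq,
        wzb_mul dFn ((differentiableAt_const 1).fun_sub (dG.fun_mul dG)),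
        wzb_const_mul 2 (dconjB.fun_mul dQinv),
        wzb_mul dconjB dQinv,
        wzb_conj dB,
        wzb_inv dQf hQfz,
        wzb_sub (dGG.fun_mul dGG) (differentiableAt_const 1),
        wzb_mul dGG dGG,
        wzb_mul dG dconjG,
        wzb_conj dG,
        wzb_sub (differentiableAt_const 1) (dG.fun_mul dG),
        wzb_mul dG dG]
      simp only [wzb_const]
      rw [hcp]
      push_cast
      rw [hre]
      simp only [← Complex.mul_conj]
      field_simp
      ring
    have E1 : wzb (fun w => phi3 G w 1) z
        = ((8 * Complex.normSq (wzb G z) * (G z).im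
            / ((1 - Complex.normSq (G z)) * (1 + Complex.normSq (G z))^2) : ℝ) : ℂ) := by
      have hEq : (fun w => phi3 G w 1) =ᶠ[nhds z]
          fun w => (2 * (conj (wzb G w) * ((G w * conj (G w)) * (G w * conj (G w)) - 1)⁻¹))
            * (Complex.I * (1 + G w * G w)) := by
        filter_upwards [hΩ.mem_nhds hz] with w hw
        simp only [phi3, Matrix.cons_val_one, Matrix.head_cons, Matrix.cons_val_zero]
        rw [hev w hw]; ring
      rw [wzb_congr hEq,
        wzb_mul dFn (((differentiableAt_const 1).fun_add (dG.fun_mul dG)).const_mul Complex.I),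
        wzb_const_mul 2 (dconjB.fun_mul dQinv),
        wzb_mul dconjB dQinv,
        wzb_conj dB,
        wzb_inv dQf hQfz,
        wzb_sub (dGG.fun_mul dGG) (differentiableAt_const 1),
        wzb_mul dGG dGG,
        wzb_mul dG dconjG,
        wzb_conj dG,
        wzb_const_mul Complex.I ((differentiableAt_const 1).fun_add (dG.fun_mul dG)),
        wzb_add (differentiableAt_const 1) (dG.fun_mul dG),
        wzb_mul dG dG]
      simp only [wzb_const]
      rw [hcp]
      push_cast
      rw [him]
      simp only [← Complex.mul_conj]
      field_simp
      ring
    have E2 : wzb (fun w => phi3 G w 2) z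
        = ((-(4 * Complex.normSq (wzb G z)) / (1 + Complex.normSq (G z))^2 : ℝ) : ℂ) := by
      have hEq : (fun w => phi3 G w 2) =ᶠ[nhds z]
          fun w => (2 * (conj (wzb G w) * ((G w * conj (G w)) * (G w * conj (G w)) - 1)⁻¹))
            * (2 * G w) := by
        filter_upwards [hΩ.mem_nhds hz] with w hw
        simp only [phi3, Matrix.cons_val_two, Matrix.tail_cons, Matrix.head_cons]
        rw [hev w hw]
      rw [wzb_congr hEq,
        wzb_mul dFn (dG.const_mul 2),
        wzb_const_mul 2 (dconjB.fun_mul dQinv),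
        wzb_mul dconjB dQinv,
        wzb_conj dB,
        wzb_inv dQf hQfz,
        wzb_sub (dGG.fun_mul dGG) (differentiableAt_const 1),
        wzb_mul dGG dGG,
        wzb_mul dG dconjG,
        wzb_conj dG,
        wzb_const_mul 2 dG]
      simp only [wzb_const]
      rw [hcp]
      push_cast
      simp only [← Complex.mul_conj]
      field_simp
      ring
    intro k
    fin_cases k
    · show (wzb (fun w => phi3 G w 0) z).im = 0
      rw [E0]; exact Complex.ofReal_im _
    · show (wzb (fun w => phi3 G w 1) z).im = 0
      rw [E1]; exact Complex.ofReal_im _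
    · show (wzb (fun w => phi3 G w 2) z).im = 0
      rw [E2]; exact Complex.ofReal_im _
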